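/- If φ: M → M is an expansive homeomorphism of a compact metric space with expansive constant c > 0, and 𝓡 is a topological partition of M with diameter d(𝓡) < c, then 𝓡 is a generator, i.e., lim_{n→∞} d(⋁_{k=-n}^{n} φᵏ𝓡) = 0. -/

import Mathlib

open Filter

/-- A topological partition: a finite family of pairwise disjoint open sets
whose closures cover the space. -/
def IsTopPartition {M : Type*} [TopologicalSpace M] {ι : Type*} [Fintype ι]
    (R : ι → Set M) : Prop :=
  (∀ i, IsOpen (R i)) ∧
  (∀ i j, i ≠ j → R i ∩ R j = ∅) ∧
  (⋃ i, closure (R i)) = Set.univ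

/-- Every integer power of (the underlying equiv of) a homeomorphism is realized by
a homeomorphism. -/
lemma exists_homeomorph_zpow {M : Type*} [TopologicalSpace M] (φ : M ≃ₜ M) (k : ℤ) :
    ∃ ψ : M ≃ₜ M, ψ.toEquiv = φ.toEquiv ^ k := by
  induction k using Int.induction_on with
  | zero => exact ⟨Homeomorph.refl M, rfl⟩
  | succ n ih =>
    obtain ⟨ψ, hψ⟩ := ih
    refine ⟨φ.trans ψ, ?_⟩
    rw [zpow_add_one, ← hψ]
    rfl
  | pred n ih =>
    obtain ⟨ψ, hψ⟩ := ih
    refine ⟨φ.symm.trans ψ, ?_⟩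
    rw [zpow_sub_one, ← hψ]
    rfl

/-- If `φ` is an expansive homeomorphism of a compact metric space with
expansive constant `c > 0` and `𝓡` is a topological partition of diameter
less than `c`, then `𝓡` is a generator: the diameters of the members of the
iterated refinements `⋁_{k=-n}^{n} φᵏ𝓡` tend to `0`. -/
theorem expansive_partition_is_generator {M : Type*} [MetricSpace M] [CompactSpace M]
    (φ : M ≃ₜ M) (c : ℝ) (hc : 0 < c)
    (hexp : ∀ p q : M, (∀ n : ℤ, dist ((φ.toEquiv ^ n) p) ((φ.toEquiv ^ n) q) < c) → p = q)
    {m : ℕ} (R : Fin m → Set M) (hR : IsTopPartition R)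
    (hdiam : ∀ i, Metric.diam (R i) < c) :
    Tendsto (fun n : ℕ =>
        ⨆ x : ℤ → Fin m,
          EMetric.diam (⋂ k ∈ Finset.Icc (-(n : ℤ)) (n : ℤ), (φ.toEquiv ^ k) '' R (x k)))
      atTop (nhds 0) := by
  classical
  set D : ℕ → (ℤ → Fin m) → Set M :=
    fun n x => ⋂ k ∈ Finset.Icc (-(n : ℤ)) (n : ℤ), (φ.toEquiv ^ k) '' R (x k) with hDdef
  set s : ℕ → ENNReal := fun n => ⨆ x : ℤ → Fin m, EMetric.diam (D n x) with hsdef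
  show Tendsto s atTop (nhds 0)
  have hanti : Antitone s := by
    intro n n' hnn'
    refine iSup_mono fun x => EMetric.diam_mono ?_
    intro y hy
    simp only [hDdef, Set.mem_iInter] at hy ⊢
    intro k hk
    refine hy k (Finset.Icc_subset_Icc ?_ ?_ hk)
    · exact neg_le_neg (by exact_mod_cast hnn')
    · exact_mod_cast hnn'
  rw [ENNReal.tendsto_atTop_zero]
  intro ε hε
  by_contra hcon
  push_neg at hcon
  have hall : ∀ n : ℕ, ε < s n := by
    intro n
    obtain ⟨n', hn', hlt⟩ := hcon n
    exact hlt.trans_le (hanti hn')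
  -- extract witnesses
  have H : ∀ n : ℕ, ∃ x : ℤ → Fin m, ∃ p q : M,
      p ∈ D n x ∧ q ∈ D n x ∧ ε < edist p q := by
    intro n
    have := hall n
    rw [hsdef, lt_iSup_iff] at this
    obtain ⟨x, hx⟩ := this
    have : ¬ EMetric.diam (D n x) ≤ ε := not_le.mpr hx
    rw [show EMetric.diam (D n x) = Metric.ediam (D n x) from rfl, Metric.ediam_le_iff] at this
    push_neg at this
    obtain ⟨p, hp, q, hq, hpq⟩ := this
    exact ⟨x, p, q, hp, hq, hpq⟩
  choose x p q hp hq hpq using H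
  -- M nonempty, Fin m nonempty
  have hMne : Nonempty M := ⟨p 0⟩
  have hmne : Nonempty (Fin m) := by
    have h0 := hR.2.2
    have : (p 0) ∈ ⋃ i, closure (R i) := h0 ▸ Set.mem_univ _
    obtain ⟨i, -⟩ := Set.mem_iUnion.mp this
    exact ⟨i⟩
  have huniv : (Finset.univ : Finset (Fin m)).Nonempty := Finset.univ_nonempty
  set d0 : ℝ := Finset.univ.sup' huniv (fun i => Metric.diam (R i)) with hd0def
  have hd0c : d0 < c := by
    rw [hd0def, Finset.sup'_lt_iff huniv]
    exact fun i _ => hdiam i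
  have hled0 : ∀ i, Metric.diam (R i) ≤ d0 := by
    intro i
    rw [hd0def]
    exact Finset.le_sup' (fun i => Metric.diam (R i)) (Finset.mem_univ i)
  have hbd : ∀ i, Bornology.IsBounded (R i) := fun i =>
    isCompact_univ.isBounded.subset (Set.subset_univ _)
  -- compactness: convergent subsequence of pairs
  obtain ⟨⟨a, b⟩, -, σ, hσ, hconv⟩ :=
    isCompact_univ.tendsto_subseq (x := fun n => (p n, q n)) fun n => Set.mem_univ _
  have hpa : Tendsto (fun n => p (σ n)) atTop (nhds a) :=
    (continuous_fst.tendsto _).comp hconv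
  have hqb : Tendsto (fun n => q (σ n)) atTop (nhds b) :=
    (continuous_snd.tendsto _).comp hconv
  -- the limits are distinct
  have hab : a ≠ b := by
    have hε_le : ε ≤ edist a b := by
      refine ge_of_tendsto' (hpa.edist hqb) ?_ |>.trans_eq rfl
      · exact fun n => (hpq (σ n)).le
    intro h
    rw [h, edist_self] at hε_le
    exact (hε.trans_le hε_le).false
  -- key estimate: all iterates stay within d0
  have key : ∀ k : ℤ, dist ((φ.toEquiv ^ k).symm a) ((φ.toEquiv ^ k).symm b) ≤ d0 := by
    intro k
    obtain ⟨ψ, hψ⟩ := exists_homeomorph_zpow φ k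
    have hψ' : ∀ y : M, (φ.toEquiv ^ k).symm y = ψ.symm y := by
      intro y; rw [← hψ]; rfl
    rw [hψ' a, hψ' b]
    have hmem : ∀ n : ℕ, k.natAbs ≤ n →
        ψ.symm (p n) ∈ R (x n k) ∧ ψ.symm (q n) ∈ R (x n k) := by
      intro n hn
      have hk : k ∈ Finset.Icc (-(n : ℤ)) (n : ℤ) := by
        rw [Finset.mem_Icc]
        omega
      have hp' := hp n
      have hq' := hq n
      simp only [hDdef, Set.mem_iInter] at hp' hq'
      have hp'' := hp' k hk
      have hq'' := hq' k hk
      constructor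
      · obtain ⟨y, hy, hyeq⟩ := hp''
        have : ψ.symm (p n) = y := by
          rw [← hyeq, ← hψ]; exact Equiv.symm_apply_apply _ y
        rwa [this]
      · obtain ⟨y, hy, hyeq⟩ := hq''
        have : ψ.symm (q n) = y := by
          rw [← hyeq, ← hψ]; exact Equiv.symm_apply_apply _ y
        rwa [this]
    have htend : Tendsto (fun n => dist (ψ.symm (p (σ n))) (ψ.symm (q (σ n))))
        atTop (nhds (dist (ψ.symm a) (ψ.symm b))) :=
      ((ψ.symm.continuous.tendsto a).comp hpa).dist
        ((ψ.symm.continuous.tendsto b).comp hqb)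
    refine le_of_tendsto htend ?_
    filter_upwards [eventually_ge_atTop k.natAbs] with n hn
    have hσn : k.natAbs ≤ σ n := hn.trans (hσ.le_apply)
    obtain ⟨h1, h2⟩ := hmem (σ n) hσn
    calc dist (ψ.symm (p (σ n))) (ψ.symm (q (σ n)))
        ≤ Metric.diam (R (x (σ n) k)) := Metric.dist_le_diam_of_mem (hbd _) h1 h2
      _ ≤ d0 := hled0 _
  -- contradiction with expansiveness
  refine hab (hexp a b fun n => ?_)
  have h1 : φ.toEquiv ^ n = (φ.toEquiv ^ (-n)).symm := by
    rw [← Equiv.Perm.inv_def, zpow_neg, inv_inv]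
  rw [h1]
  exact (key (-n)).trans_lt hd0c
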